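/- Let G be a simple graph on n vertices with walk matrix W, and let Ḡ be its complement with walk matrix W̄. If 2^{⌊n/2⌋} divides |det(W)| and the quotient |det(W)| · 2^{−⌊n/2⌋} is odd and square-free, then 2^{⌊n/2⌋} divides |det(W̄)|, and the quotient |det(W̄)| · 2^{−⌊n/2⌋} equals |det(W)| · 2^{−⌊n/2⌋}; in particular it is also odd and square-free. -/

import Mathlib

open Matrix

open scoped Classical in
/-- The 0/1 adjacency matrix of a simple graph, over the integers. -/
noncomputable def adjMat {V : Type*} [Fintype V] (G : SimpleGraph V) : Matrix V V ℤ :=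
  Matrix.of fun u v => if G.Adj u v then (1 : ℤ) else 0

/-- The walk matrix of a simple graph on `Fin n`: its `j`-th column is ``A^j e``
where `e` is the all-ones vector. -/
noncomputable def walkMat {n : ℕ} (G : SimpleGraph (Fin n)) : Matrix (Fin n) (Fin n) ℤ :=
  Matrix.of fun i j => ((adjMat G ^ (j : ℕ)) *ᵥ fun _ => (1 : ℤ)) i

/-- `G ∪ w`: adjoin a new vertex (labelled `0`) adjacent to no vertex of `G`;
the original vertex `i` of `G` becomes `i.succ`. -/
def unionVertex {n : ℕ} (G : SimpleGraph (Fin n)) : SimpleGraph (Fin (n + 1)) where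
  Adj u v := ∃ i j : Fin n, u = i.succ ∧ v = j.succ ∧ G.Adj i j
  symm := by
    constructor
    rintro u v ⟨i, j, hu, hv, h⟩
    exact ⟨j, i, hv, hu, h.symm⟩
  loopless := by
    constructor
    rintro u ⟨i, j, rfl, hv, h⟩
    obtain rfl : i = j := Fin.succ_inj.mp hv
    exact G.loopless.irrefl i h

/-- `G ∨ w`: adjoin a new vertex (labelled `0`) adjacent to every vertex of `G`;
the original vertex `i` of `G` becomes `i.succ`. -/
def joinVertex {n : ℕ} (G : SimpleGraph (Fin n)) : SimpleGraph (Fin (n + 1)) where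
  Adj u v := (u = 0 ∧ v ≠ 0) ∨ (v = 0 ∧ u ≠ 0) ∨
    ∃ i j : Fin n, u = i.succ ∧ v = j.succ ∧ G.Adj i j
  symm := by
    constructor
    rintro u v (⟨h1, h2⟩ | ⟨h1, h2⟩ | ⟨i, j, hu, hv, h⟩)
    · exact Or.inr (Or.inl ⟨h1, h2⟩)
    · exact Or.inl ⟨h1, h2⟩
    · exact Or.inr (Or.inr ⟨j, i, hv, hu, h.symm⟩)
  loopless := by
    constructor
    rintro u (⟨h1, h2⟩ | ⟨h1, h2⟩ | ⟨i, j, rfl, hv, h⟩)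
    · exact h2 h1
    · exact h2 h1
    · obtain rfl : i = j := Fin.succ_inj.mp hv
      exact G.loopless.irrefl i h

/-- The sequence `G₀, G₁, G₂, …` where `Gᵢ = G_{i-1} ∪ wᵢ` for odd `i` and
`Gᵢ = G_{i-1} ∨ wᵢ` for even `i ≥ 2`. -/
def seqGraph {n0 : ℕ} (G0 : SimpleGraph (Fin n0)) : (i : ℕ) → SimpleGraph (Fin (n0 + i))
  | 0 => G0
  | (i + 1) => if (i + 1) % 2 = 1 then unionVertex (seqGraph G0 i) else joinVertex (seqGraph G0 i)

/-- A graph is determined by its generalized spectrum. -/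
def IsDGS {n : ℕ} (G : SimpleGraph (Fin n)) : Prop :=
  ∀ H : SimpleGraph (Fin n),
    (adjMat H).charpoly = (adjMat G).charpoly →
    (adjMat Hᶜ).charpoly = (adjMat Gᶜ).charpoly →
    Nonempty (H ≃g G)

/-- Coefficients expressing `(J - 1 - A)^j e` in terms of `A^k e`. -/
def coeffs (s : ℕ → ℤ) : ℕ → ℕ → ℤ
  | 0, k => if k = 0 then 1 else 0
  | (j+1), k =>
      if k = 0 then (∑ m ∈ Finset.range (j+1), coeffs s j m * s m) - coeffs s j 0
      else - coeffs s j k - coeffs s j (k-1)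

lemma coeffs_eq_zero (s : ℕ → ℤ) : ∀ j k, j < k → coeffs s j k = 0 := by
  intro j
  induction j with
  | zero =>
    intro k hk
    have hne : k ≠ 0 := by omega
    simp only [coeffs, if_neg hne]
  | succ j ih =>
    intro k hk
    have hk0 : k ≠ 0 := by omega
    simp only [coeffs, if_neg hk0]
    rw [ih k (by omega), ih (k-1) (by omega)]
    ring

lemma coeffs_diag (s : ℕ → ℤ) : ∀ j, coeffs s j j = (-1) ^ j := by
  intro j
  induction j with
  | zero => simp [coeffs]
  | succ j ih =>
    simp only [coeffs, if_neg (Nat.succ_ne_zero j)]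
    rw [coeffs_eq_zero s j (j+1) (by omega), Nat.add_sub_cancel, ih]
    ring

lemma adjMat_compl {n : ℕ} (G : SimpleGraph (Fin n)) :
    adjMat Gᶜ = (Matrix.of fun _ _ => (1:ℤ)) - 1 - adjMat G := by
  ext u v
  simp only [adjMat, SimpleGraph.compl_adj, Matrix.sub_apply, Matrix.of_apply,
    Matrix.one_apply]
  by_cases huv : u = v
  · subst huv; simp [G.loopless.irrefl u]
  · by_cases h : G.Adj u v <;> simp [huv, h]

lemma walk_compl_key {n : ℕ} (G : SimpleGraph (Fin n)) :
    ∀ j, (adjMat Gᶜ ^ j) *ᵥ (fun _ => (1:ℤ)) = fun i =>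
      ∑ k ∈ Finset.range (j+1),
        coeffs (fun m => ∑ i, ((adjMat G ^ m) *ᵥ (fun _ => (1:ℤ))) i) j k *
          ((adjMat G ^ k) *ᵥ (fun _ => (1:ℤ))) i := by
  set A := adjMat G
  set e : Fin n → ℤ := fun _ => 1
  set s : ℕ → ℤ := fun m => ∑ i, ((A ^ m) *ᵥ e) i
  intro j
  induction j with
  | zero => funext i; simp [coeffs, e]
  | succ j ih =>
    have hstep : (adjMat Gᶜ ^ (j+1)) *ᵥ e = adjMat Gᶜ *ᵥ ((adjMat Gᶜ ^ j) *ᵥ e) := by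
      rw [mulVec_mulVec, ← pow_succ']
    rw [hstep, ih, adjMat_compl G]
    funext i
    have hJ : ∀ v : Fin n → ℤ, ((Matrix.of fun _ _ => (1:ℤ)) *ᵥ v) i = ∑ m, v m := by
      intro v; simp [mulVec, dotProduct]
    rw [sub_mulVec, sub_mulVec]
    simp only [Pi.sub_apply, one_mulVec]
    rw [hJ]
    have hsum : (∑ m, ∑ k ∈ Finset.range (j+1), coeffs s j k * ((A ^ k) *ᵥ e) m)
        = ∑ k ∈ Finset.range (j+1), coeffs s j k * s k := by
      rw [Finset.sum_comm]
      simp [s, Finset.mul_sum]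
    have hAlin : ∀ w : ℕ → Fin n → ℤ,
        (A *ᵥ fun x => ∑ k ∈ Finset.range (j+1), coeffs s j k * w k x) i
          = ∑ k ∈ Finset.range (j+1), coeffs s j k * (A *ᵥ w k) i := by
      intro w
      simp only [mulVec, dotProduct, Finset.mul_sum]
      rw [Finset.sum_comm]
      exact Finset.sum_congr rfl fun k _ => Finset.sum_congr rfl fun x _ => by ring
    have hA : (A *ᵥ fun x => ∑ k ∈ Finset.range (j+1), coeffs s j k * ((A ^ k) *ᵥ e) x) i
        = ∑ k ∈ Finset.range (j+1), coeffs s j k * ((A ^ (k+1)) *ᵥ e) i := by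
      rw [hAlin (fun k => (A ^ k) *ᵥ e)]
      refine Finset.sum_congr rfl fun k _ => ?_
      rw [mulVec_mulVec, ← pow_succ']
    rw [hsum, hA]
    rw [Finset.sum_range_succ' (fun k => coeffs s (j+1) k * ((A ^ k) *ᵥ e) i) (j+1)]
    simp only [coeffs, Nat.succ_ne_zero, if_false, if_pos rfl, Nat.add_sub_cancel,
      pow_zero, one_mulVec]
    have h2 : ∑ k ∈ Finset.range (j+1),
        (- coeffs s j (k+1) - coeffs s j k) * ((A ^ (k+1)) *ᵥ e) i
        = -(∑ k ∈ Finset.range (j+1), coeffs s j (k+1) * ((A ^ (k+1)) *ᵥ e) i)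
          - ∑ k ∈ Finset.range (j+1), coeffs s j k * ((A ^ (k+1)) *ᵥ e) i := by
      rw [← Finset.sum_neg_distrib, ← Finset.sum_sub_distrib]
      exact Finset.sum_congr rfl fun k _ => by ring
    have h3 : ∑ k ∈ Finset.range (j+1), coeffs s j (k+1) * ((A ^ (k+1)) *ᵥ e) i
        = (∑ k ∈ Finset.range (j+1), coeffs s j k * ((A ^ k) *ᵥ e) i) - coeffs s j 0 * e i := by
      have ha := Finset.sum_range_succ' (fun k => coeffs s j k * ((A ^ k) *ᵥ e) i) (j+1)
      have hb := Finset.sum_range_succ (fun k => coeffs s j k * ((A ^ k) *ᵥ e) i) (j+1)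
      rw [coeffs_eq_zero s j (j+1) (by omega)] at hb
      simp only [pow_zero, one_mulVec, zero_mul, add_zero] at ha hb
      rw [hb] at ha
      linarith [ha]
    have he : e i = 1 := rfl
    rw [h2, h3, he]
    simp only [if_true]
    ring

lemma natAbs_det_walkMat_compl {n : ℕ} (G : SimpleGraph (Fin n)) :
    ((walkMat Gᶜ).det).natAbs = ((walkMat G).det).natAbs := by
  set s : ℕ → ℤ := fun m => ∑ i, ((adjMat G ^ m) *ᵥ (fun _ => (1:ℤ))) i with hs
  set U : Matrix (Fin n) (Fin n) ℤ := Matrix.of fun k j : Fin n => coeffs s (j:ℕ) (k:ℕ) with hU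
  have hW : walkMat Gᶜ = walkMat G * U := by
    ext i j
    rw [Matrix.mul_apply]
    have hL := congrFun (walk_compl_key G (j:ℕ)) i
    show ((adjMat Gᶜ ^ (j:ℕ)) *ᵥ fun _ => (1:ℤ)) i = _
    rw [hL]
    have hR : ∑ k : Fin n, walkMat G i k * U k j
        = ∑ k ∈ Finset.range n, coeffs s (j:ℕ) k * ((adjMat G ^ k) *ᵥ fun _ => (1:ℤ)) i := by
      rw [← Fin.sum_univ_eq_sum_range
        (fun k => coeffs s (j:ℕ) k * ((adjMat G ^ k) *ᵥ fun _ => (1:ℤ)) i) n]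
      exact Finset.sum_congr rfl fun k _ => by
        simp only [walkMat, hU, Matrix.of_apply]; ring
    rw [hR]
    refine Finset.sum_subset ?_ ?_
    · intro k hk
      simp only [Finset.mem_range] at hk ⊢
      have := j.isLt
      omega
    · intro k hk hk2
      simp only [Finset.mem_range] at hk hk2
      rw [coeffs_eq_zero s (j:ℕ) k (by omega), zero_mul]
  have hdetU : (U.det).natAbs = 1 := by
    have htri : U.BlockTriangular id := by
      intro i j hij
      exact coeffs_eq_zero s (j:ℕ) (i:ℕ) hij
    rw [Matrix.det_of_upperTriangular htri]
    have : ∀ i : Fin n, U i i = (-1 : ℤ) ^ (i : ℕ) := fun i => coeffs_diag s (i:ℕ)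
    rw [Finset.prod_congr rfl fun i _ => this i, Finset.prod_pow_eq_pow_sum]
    simp [Int.natAbs_pow]
  rw [hW, Matrix.det_mul, Int.natAbs_mul, hdetU, mul_one]

/-- the extremal divisibility condition 𝒞 transfers from a graph to its
complement, with the same odd square-free quotient. -/
theorem condition_C_compl {n : ℕ} (G : SimpleGraph (Fin n))
    (hdvd : 2 ^ (n / 2) ∣ ((walkMat G).det).natAbs)
    (hodd : Odd (((walkMat G).det).natAbs / 2 ^ (n / 2)))
    (hsf : Squarefree (((walkMat G).det).natAbs / 2 ^ (n / 2))) :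
    2 ^ (n / 2) ∣ ((walkMat Gᶜ).det).natAbs ∧
      ((walkMat Gᶜ).det).natAbs / 2 ^ (n / 2) = ((walkMat G).det).natAbs / 2 ^ (n / 2) ∧
      Odd (((walkMat Gᶜ).det).natAbs / 2 ^ (n / 2)) ∧
      Squarefree (((walkMat Gᶜ).det).natAbs / 2 ^ (n / 2)) := by
  rw [natAbs_det_walkMat_compl G]
  exact ⟨hdvd, rfl, hodd, hsf⟩
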